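/- Talagrand's concentration inequality on the hypercube: for positive integers k ≤ n and any nonempty set F ⊆ {0,1}^n, letting F_{≥k} = {x ∈ {0,1}^n : dist(x,y) ≥ k for all y ∈ F}, the densities satisfy μ_n(F_{≥k}) · μ_n(F) ≤ e^{−k²/n}. -/

import Mathlib

open Finset


def cns {n : ℕ} (b : Bool) (x : Fin n → Bool) : Fin (n+1) → Bool := Fin.cons b x

@[simp] lemma cns_zero {n : ℕ} (b : Bool) (x : Fin n → Bool) : cns b x 0 = b := rfl
@[simp] lemma cns_succ {n : ℕ} (b : Bool) (x : Fin n → Bool) (i : Fin n) :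
    cns b x i.succ = x i := by simp [cns]
@[simp] lemma tail_cns {n : ℕ} (b : Bool) (x : Fin n → Bool) : Fin.tail (cns b x) = x :=
  Fin.tail_cons (α := fun _ : Fin (n+1) => Bool) b x
lemma cns_self_tail {n : ℕ} (z : Fin (n+1) → Bool) : cns (z 0) (Fin.tail z) = z :=
  Fin.cons_self_tail z

noncomputable def dS {n : ℕ} (F : Finset (Fin n → Bool)) (x : Fin n → Bool) : ℕ :=
  sInf ((fun y => hammingDist x y) '' (F : Set (Fin n → Bool)))

lemma dS_le {n : ℕ} {F : Finset (Fin n → Bool)} {x y : Fin n → Bool} (hy : y ∈ F) :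
    dS F x ≤ hammingDist x y :=
  Nat.sInf_le ⟨y, by simpa using hy, rfl⟩

lemma dS_mem {n : ℕ} {F : Finset (Fin n → Bool)} (hF : F.Nonempty) (x : Fin n → Bool) :
    ∃ y ∈ F, hammingDist x y = dS F x := by
  obtain ⟨z, hz⟩ := hF
  have hne : ((fun y => hammingDist x y) '' (F : Set (Fin n → Bool))).Nonempty :=
    ⟨_, ⟨z, by simpa using hz, rfl⟩⟩
  obtain ⟨y, hy, h⟩ := Nat.sInf_mem hne
  exact ⟨y, by simpa using hy, h⟩

lemma hd_cons {n : ℕ} (b c : Bool) (x y : Fin n → Bool) :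
    hammingDist (cns b x) (cns c y) = (if b = c then 0 else 1) + hammingDist x y := by
  classical
  have h1 : hammingDist (cns b x) (cns c y)
      = ∑ i : Fin (n+1), if cns b x i ≠ cns c y i then 1 else 0 := card_filter _ _
  have h2 : hammingDist x y = ∑ i : Fin n, if x i ≠ y i then 1 else 0 := card_filter _ _
  rw [h1, h2, Fin.sum_univ_succ]
  simp only [cns_zero, cns_succ]
  by_cases h : b = c <;> simp [h]

def Fb {n : ℕ} (F : Finset (Fin (n+1) → Bool)) (b : Bool) : Finset (Fin n → Bool) :=
  univ.filter (fun x => cns b x ∈ F)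

lemma mem_Fb {n : ℕ} {F : Finset (Fin (n+1) → Bool)} {b : Bool} {x : Fin n → Bool} :
    x ∈ Fb F b ↔ cns b x ∈ F := by simp [Fb]

lemma cns_inj {n : ℕ} (b : Bool) : Function.Injective (cns (n := n) b) := by
  intro u v h
  have := congrArg Fin.tail h
  simpa using this

lemma card_Fb {n : ℕ} (F : Finset (Fin (n+1) → Bool)) :
    (Fb F false).card + (Fb F true).card = F.card := by
  classical
  have him : ∀ b : Bool,
      (Fb F b).image (cns b) = F.filter (fun z => z 0 = b) := by
    intro b
    ext z
    simp only [mem_image, mem_filter, mem_Fb]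
    constructor
    · rintro ⟨x, hx, rfl⟩
      exact ⟨hx, rfl⟩
    · rintro ⟨hz, h0⟩
      refine ⟨Fin.tail z, ?_, ?_⟩ <;> rw [← h0, cns_self_tail] <;> exact hz
  have hc : ∀ b : Bool, (Fb F b).card = (F.filter (fun z => z 0 = b)).card := by
    intro b
    rw [← him b]
    exact (Finset.card_image_of_injective _ (cns_inj b)).symm
  rw [hc, hc]
  have := Finset.card_filter_add_card_filter_not (s := F) (p := fun z => z 0 = false)
  simpa using this

lemma sum_cns_split {n : ℕ} (f : (Fin (n+1) → Bool) → ℝ) :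
    ∑ z, f z = (∑ x, f (cns false x)) + (∑ x, f (cns true x)) := by
  classical
  have hbij : Function.Bijective (fun p : Bool × (Fin n → Bool) => cns p.1 p.2) := by
    constructor
    · rintro ⟨b, u⟩ ⟨c, v⟩ h
      have h0 := congrArg (fun g => g 0) h
      have ht := congrArg Fin.tail h
      simp only [cns_zero] at h0
      simp only [tail_cns] at ht
      simp_all
    · intro z
      exact ⟨(z 0, Fin.tail z), cns_self_tail z⟩
  have := Fintype.sum_bijective _ hbij (fun p : Bool × (Fin n → Bool) => f (cns p.1 p.2)) f
    (fun p => rfl)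
  rw [← this, Fintype.sum_prod_type, Fintype.sum_bool]
  ring

lemma dS_cns_le_same {n : ℕ} {F : Finset (Fin (n+1) → Bool)} {b : Bool}
    (h : (Fb F b).Nonempty) (x : Fin n → Bool) :
    dS F (cns b x) ≤ dS (Fb F b) x := by
  obtain ⟨y, hy, hxy⟩ := dS_mem h x
  calc dS F (cns b x) ≤ hammingDist (cns b x) (cns b y) := dS_le (mem_Fb.1 hy)
    _ = hammingDist x y := by rw [hd_cons]; simp
    _ = dS (Fb F b) x := hxy

lemma dS_cns_le_other {n : ℕ} {F : Finset (Fin (n+1) → Bool)} {b c : Bool} (hbc : b ≠ c)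
    (h : (Fb F c).Nonempty) (x : Fin n → Bool) :
    dS F (cns b x) ≤ dS (Fb F c) x + 1 := by
  obtain ⟨y, hy, hxy⟩ := dS_mem h x
  calc dS F (cns b x) ≤ hammingDist (cns b x) (cns c y) := dS_le (mem_Fb.1 hy)
    _ = 1 + hammingDist x y := by rw [hd_cons, if_neg hbc]
    _ = dS (Fb F c) x + 1 := by rw [hxy]; ring

-- analytic core: 2 + e^t + e^{-t} ≤ 4 e^{t²/4}
lemma aux_exp (t : ℝ) : 2 + Real.exp t + Real.exp (-t) ≤ 4 * Real.exp (t^2/4) := by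
  have h := Real.cosh_le_exp_half_sq (t/2)
  have hc : Real.cosh (t/2) = (Real.exp (t/2) + Real.exp (-(t/2))) / 2 := Real.cosh_eq _
  have h1 : Real.exp (t/2) * Real.exp (t/2) = Real.exp t := by
    rw [← Real.exp_add]; ring_nf
  have h2 : Real.exp (-(t/2)) * Real.exp (-(t/2)) = Real.exp (-t) := by
    rw [← Real.exp_add]; ring_nf
  have h3 : Real.exp (t/2) * Real.exp (-(t/2)) = 1 := by
    rw [← Real.exp_add]; simp
  have h4 : ((t/2)^2/2 : ℝ) = t^2/8 := by ring
  rw [hc, h4] at h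
  have h5 : Real.exp (t^2/8) * Real.exp (t^2/8) = Real.exp (t^2/4) := by
    rw [← Real.exp_add]; ring_nf
  have hpos : (0:ℝ) < Real.exp (t/2) + Real.exp (-(t/2)) := by positivity
  nlinarith [h, hpos, Real.exp_pos (t^2/8)]

-- the balancing scalar lemma, unbalanced case
lemma scalar_aux {U a b C E E' S0 S1 : ℝ} (hU : 0 ≤ U) (ha : 0 < a) (hb : 0 < b)
    (hE : 0 < E) (hE' : 0 < E') (hEE' : E * E' = 1) (h1 : U * a ≤ C)
    (hS0U : S0 ≤ U) (hS1U : S1 ≤ E * U) (hab : E * b < a) :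
    (S0 + S1) * (a + b) ≤ (2 + E + E') * C := by
  have hb' : b ≤ E' * a := by nlinarith
  have hUb : U * b ≤ E' * C :=
    calc U * b ≤ U * (E' * a) := mul_le_mul_of_nonneg_left hb' hU
      _ = E' * (U * a) := by ring
      _ ≤ E' * C := mul_le_mul_of_nonneg_left h1 hE'.le
  have hsum : S0 + S1 ≤ (1 + E) * U := by linarith
  calc (S0 + S1) * (a + b) ≤ ((1 + E) * U) * (a + b) :=
        mul_le_mul_of_nonneg_right hsum (by linarith)
    _ = (1 + E) * (U * a) + (1 + E) * (U * b) := by ring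
    _ ≤ (1 + E) * C + (1 + E) * (E' * C) := by
        have hE1 : (0:ℝ) ≤ 1 + E := by linarith
        have := mul_le_mul_of_nonneg_left h1 hE1
        have := mul_le_mul_of_nonneg_left hUb hE1
        linarith
    _ = (2 + E + E') * C := by linear_combination C * hEE'

lemma scalar {U V a b C E E' S0 S1 : ℝ} (hU : 0 ≤ U) (hV : 0 ≤ V) (ha : 0 < a) (hb : 0 < b)
    (hE : 0 < E) (hE' : 0 < E') (hEE' : E * E' = 1)
    (h1 : U * a ≤ C) (h2 : V * b ≤ C)
    (hS0U : S0 ≤ U) (hS0V : S0 ≤ E * V) (hS1V : S1 ≤ V) (hS1U : S1 ≤ E * U) :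
    (S0 + S1) * (a + b) ≤ (2 + E + E') * C := by
  have hC : 0 ≤ C := le_trans (mul_nonneg hU ha.le) h1
  rcases lt_or_ge (E * b) a with hab | hab
  · exact scalar_aux hU ha hb hE hE' hEE' h1 hS0U hS1U hab
  · rcases lt_or_ge (E * a) b with hba | hba
    · have := scalar_aux hV hb ha hE hE' hEE' h2 hS1V hS0V hba
      linarith [this]
    · -- middle case : a ≤ E*b, b ≤ E*a
      have h3 : a^2 + b^2 ≤ (E + E') * (a * b) := by
        have k1 : 0 ≤ (E * b - a) * (E * a - b) := by nlinarith
        nlinarith [mul_pos ha hb]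
      have h4 : U * b + V * a ≤ (E + E') * C := by
        nlinarith [mul_le_mul_of_nonneg_right h1 (mul_nonneg hb.le hb.le),
          mul_le_mul_of_nonneg_right h2 (mul_nonneg ha.le ha.le),
          mul_le_mul_of_nonneg_right h3 hC, mul_pos ha hb]
      have hsum : S0 + S1 ≤ U + V := by linarith
      calc (S0 + S1) * (a + b) ≤ (U + V) * (a + b) :=
            mul_le_mul_of_nonneg_right hsum (by linarith)
        _ = U * a + V * b + (U * b + V * a) := by ring
        _ ≤ C + C + (E + E') * C := by linarith
        _ = (2 + E + E') * C := by ring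

lemma key (t : ℝ) (ht : 0 ≤ t) : ∀ (n : ℕ) (F : Finset (Fin n → Bool)), F.Nonempty →
    (∑ x : Fin n → Bool, Real.exp (t * dS F x)) * F.card
      ≤ Real.exp (t^2 * n / 4) * 4 ^ n := by
  intro n
  induction n with
  | zero =>
    intro F hF
    have hcard : F.card = 1 := by
      refine le_antisymm ?_ hF.card_pos
      calc F.card ≤ Fintype.card (Fin 0 → Bool) := card_le_univ F
        _ = 1 := by simp
    have hd0 : ∀ x : Fin 0 → Bool, dS F x = 0 := by
      intro x
      obtain ⟨y, hy⟩ := hF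
      have hxy : x = y := Subsingleton.elim x y
      have := dS_le (x := x) hy
      rw [hxy] at this ⊢
      simpa [hammingDist_self] using Nat.le_zero.1 (by simpa [hammingDist_self] using this)
    have hsum : (∑ x : Fin 0 → Bool, Real.exp (t * dS F x)) = 1 := by
      rw [Finset.sum_congr rfl (fun x _ => by rw [hd0 x])]
      simp
    rw [hsum, hcard]
    simp
  | succ n ih =>
    intro F hF
    set C : ℝ := Real.exp (t^2 * n / 4) * 4 ^ n with hC
    have hCpos : 0 < C := by positivity
    set A : Finset (Fin n → Bool) := Fb F false with hA
    set B : Finset (Fin n → Bool) := Fb F true with hB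
    have hcard : (F.card : ℝ) = A.card + B.card := by
      rw [← card_Fb F]; push_cast; ring
    set f : (Fin (n+1) → Bool) → ℝ := fun z => Real.exp (t * dS F z) with hf
    have hsplit : (∑ z, f z) = (∑ x, f (cns false x)) + (∑ x, f (cns true x)) :=
      sum_cns_split f
    set S0 : ℝ := ∑ x, f (cns false x) with hS0
    set S1 : ℝ := ∑ x, f (cns true x) with hS1
    -- bounds from fibers
    have bound_same : ∀ (b : Bool), (Fb F b).Nonempty →
        (∑ x, f (cns b x)) ≤ ∑ x, Real.exp (t * dS (Fb F b) x) := by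
      intro b hb
      refine Finset.sum_le_sum fun x _ => ?_
      refine Real.exp_le_exp.2 (mul_le_mul_of_nonneg_left ?_ ht)
      exact_mod_cast Nat.cast_le.2 (dS_cns_le_same hb x)
    have bound_other : ∀ (b c : Bool), b ≠ c → (Fb F c).Nonempty →
        (∑ x, f (cns b x)) ≤ Real.exp t * ∑ x, Real.exp (t * dS (Fb F c) x) := by
      intro b c hbc hc
      rw [Finset.mul_sum]
      refine Finset.sum_le_sum fun x _ => ?_
      have hle : (dS F (cns b x) : ℝ) ≤ (dS (Fb F c) x : ℝ) + 1 := by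
        exact_mod_cast dS_cns_le_other hbc hc x
      calc f (cns b x) ≤ Real.exp (t * ((dS (Fb F c) x : ℝ) + 1)) :=
            Real.exp_le_exp.2 (mul_le_mul_of_nonneg_left hle ht)
        _ = Real.exp t * Real.exp (t * dS (Fb F c) x) := by
            rw [← Real.exp_add]; ring_nf
    have hfiber : A.Nonempty ∨ B.Nonempty := by
      obtain ⟨z, hz⟩ := hF
      have hz' : cns (z 0) (Fin.tail z) ∈ F := by rw [cns_self_tail]; exact hz
      cases hz0 : z 0 with
      | false => exact Or.inl ⟨Fin.tail z, mem_Fb.2 (by rw [← hz0]; exact hz')⟩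
      | true => exact Or.inr ⟨Fin.tail z, mem_Fb.2 (by rw [← hz0]; exact hz')⟩
    have hRHS : Real.exp (t^2 * (n+1:ℕ) / 4) * 4 ^ (n+1) = (4 * Real.exp (t^2/4)) * C := by
      rw [hC]
      push_cast
      rw [show t^2 * (n+1) / 4 = t^2 * n / 4 + t^2/4 by ring, Real.exp_add]
      ring
    have hExp : 2 + Real.exp t + Real.exp (-t) ≤ 4 * Real.exp (t^2/4) := aux_exp t
    have hS0nn : 0 ≤ S0 := Finset.sum_nonneg fun x _ => (Real.exp_pos _).le
    have hS1nn : 0 ≤ S1 := Finset.sum_nonneg fun x _ => (Real.exp_pos _).le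
    rw [hsplit, hRHS]
    rcases hfiber with hAne | hBne'
    · rcases B.eq_empty_or_nonempty with hBe | hBne
      · -- only A
        set U : ℝ := ∑ x, Real.exp (t * dS A x) with hU
        have hUnn : 0 ≤ U := Finset.sum_nonneg fun x _ => (Real.exp_pos _).le
        have hIH : U * A.card ≤ C := ih A hAne
        have h0 : S0 ≤ U := bound_same false hAne
        have h1 : S1 ≤ Real.exp t * U := bound_other true false (by simp) hAne
        have hcard' : (F.card : ℝ) = A.card := by rw [hcard, hBe]; simp
        rw [hcard']
        have hAcpos : (0:ℝ) ≤ A.card := Nat.cast_nonneg _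
        calc (S0 + S1) * A.card ≤ ((1 + Real.exp t) * U) * A.card := by
              refine mul_le_mul_of_nonneg_right ?_ hAcpos
              linarith
          _ = (1 + Real.exp t) * (U * A.card) := by ring
          _ ≤ (1 + Real.exp t) * C := by
              refine mul_le_mul_of_nonneg_left hIH ?_
              positivity
          _ ≤ (4 * Real.exp (t^2/4)) * C := by
              refine mul_le_mul_of_nonneg_right ?_ hCpos.le
              have := Real.exp_pos (-t)
              linarith
      · -- both nonempty
        set U : ℝ := ∑ x, Real.exp (t * dS A x) with hU
        set V : ℝ := ∑ x, Real.exp (t * dS B x) with hV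
        have hUnn : 0 ≤ U := Finset.sum_nonneg fun x _ => (Real.exp_pos _).le
        have hVnn : 0 ≤ V := Finset.sum_nonneg fun x _ => (Real.exp_pos _).le
        have hIHA : U * A.card ≤ C := ih A hAne
        have hIHB : V * B.card ≤ C := ih B hBne
        have hS0U : S0 ≤ U := bound_same false hAne
        have hS0V : S0 ≤ Real.exp t * V := bound_other false true (by simp) hBne
        have hS1V : S1 ≤ V := bound_same true hBne
        have hS1U : S1 ≤ Real.exp t * U := bound_other true false (by simp) hAne
        have hacard : (0:ℝ) < A.card := by exact_mod_cast hAne.card_pos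
        have hbcard : (0:ℝ) < B.card := by exact_mod_cast hBne.card_pos
        have hEE' : Real.exp t * Real.exp (-t) = 1 := by
          rw [← Real.exp_add]; simp
        have := scalar hUnn hVnn hacard hbcard (Real.exp_pos t) (Real.exp_pos (-t)) hEE'
          hIHA hIHB hS0U hS0V hS1V hS1U
        rw [hcard]
        calc (S0 + S1) * ((A.card : ℝ) + B.card)
            ≤ (2 + Real.exp t + Real.exp (-t)) * C := this
          _ ≤ (4 * Real.exp (t^2/4)) * C := mul_le_mul_of_nonneg_right hExp hCpos.le
    · rcases A.eq_empty_or_nonempty with hAe | hAne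
      · -- only B
        set V : ℝ := ∑ x, Real.exp (t * dS B x) with hV
        have hVnn : 0 ≤ V := Finset.sum_nonneg fun x _ => (Real.exp_pos _).le
        have hIH : V * B.card ≤ C := ih B hBne'
        have h1 : S1 ≤ V := bound_same true hBne'
        have h0 : S0 ≤ Real.exp t * V := bound_other false true (by simp) hBne'
        have hcard' : (F.card : ℝ) = B.card := by rw [hcard, hAe]; simp
        rw [hcard']
        have hBcpos : (0:ℝ) ≤ B.card := Nat.cast_nonneg _
        calc (S0 + S1) * B.card ≤ ((1 + Real.exp t) * V) * B.card := by
              refine mul_le_mul_of_nonneg_right ?_ hBcpos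
              linarith
          _ = (1 + Real.exp t) * (V * B.card) := by ring
          _ ≤ (1 + Real.exp t) * C := by
              refine mul_le_mul_of_nonneg_left hIH ?_
              positivity
          _ ≤ (4 * Real.exp (t^2/4)) * C := by
              refine mul_le_mul_of_nonneg_right ?_ hCpos.le
              have := Real.exp_pos (-t)
              linarith
      · -- both nonempty (same as above)
        set U : ℝ := ∑ x, Real.exp (t * dS A x) with hU
        set V : ℝ := ∑ x, Real.exp (t * dS B x) with hV
        have hUnn : 0 ≤ U := Finset.sum_nonneg fun x _ => (Real.exp_pos _).le
        have hVnn : 0 ≤ V := Finset.sum_nonneg fun x _ => (Real.exp_pos _).le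
        have hIHA : U * A.card ≤ C := ih A hAne
        have hIHB : V * B.card ≤ C := ih B hBne'
        have hS0U : S0 ≤ U := bound_same false hAne
        have hS0V : S0 ≤ Real.exp t * V := bound_other false true (by simp) hBne'
        have hS1V : S1 ≤ V := bound_same true hBne'
        have hS1U : S1 ≤ Real.exp t * U := bound_other true false (by simp) hAne
        have hacard : (0:ℝ) < A.card := by exact_mod_cast hAne.card_pos
        have hbcard : (0:ℝ) < B.card := by exact_mod_cast hBne'.card_pos
        have hEE' : Real.exp t * Real.exp (-t) = 1 := by
          rw [← Real.exp_add]; simp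
        have := scalar hUnn hVnn hacard hbcard (Real.exp_pos t) (Real.exp_pos (-t)) hEE'
          hIHA hIHB hS0U hS0V hS1V hS1U
        rw [hcard]
        calc (S0 + S1) * ((A.card : ℝ) + B.card)
            ≤ (2 + Real.exp t + Real.exp (-t)) * C := this
          _ ≤ (4 * Real.exp (t^2/4)) * C := mul_le_mul_of_nonneg_right hExp hCpos.le

/-- Talagrand's concentration inequality on the hypercube: for `0 < k ≤ n` and a
nonempty set `F ⊆ {0,1}^n`, with `F_{≥k} = {x : dist(x,y) ≥ k for all y ∈ F}`,
one has `μ(F_{≥k}) · μ(F) ≤ e^{-k²/n}`. -/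
theorem stmt5 (n k : ℕ) (hk : 0 < k) (hkn : k ≤ n)
    (F : Finset (Fin n → Bool)) (hF : F.Nonempty) :
    (((univ : Finset (Fin n → Bool)).filter fun x =>
        ∀ y ∈ F, k ≤ hammingDist x y).card : ℝ) / 2 ^ n * ((F.card : ℝ) / 2 ^ n) ≤
      Real.exp (-(k : ℝ) ^ 2 / n) := by
  classical
  have hn : 0 < n := hk.trans_le hkn
  have hn' : (n : ℝ) ≠ 0 := by exact_mod_cast hn.ne'
  set t : ℝ := 2 * k / n with htdef
  have ht : 0 ≤ t := by positivity
  have hkey := key t ht n F hF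
  set G := (univ : Finset (Fin n → Bool)).filter fun x => ∀ y ∈ F, k ≤ hammingDist x y with hGdef
  have hxk : ∀ x ∈ G, (k : ℝ) ≤ (dS F x : ℝ) := by
    intro x hx
    rw [hGdef, mem_filter] at hx
    obtain ⟨y, hy, hxy⟩ := dS_mem hF x
    exact_mod_cast hxy ▸ hx.2 y hy
  have hGsum : (G.card : ℝ) * Real.exp (t * k) ≤ ∑ x, Real.exp (t * dS F x) := by
    calc (G.card : ℝ) * Real.exp (t * k) = ∑ _x ∈ G, Real.exp (t * k) := by
          rw [Finset.sum_const, nsmul_eq_mul]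
      _ ≤ ∑ x ∈ G, Real.exp (t * dS F x) :=
          Finset.sum_le_sum fun x hx =>
            Real.exp_le_exp.2 (mul_le_mul_of_nonneg_left (hxk x hx) ht)
      _ ≤ ∑ x, Real.exp (t * dS F x) :=
          Finset.sum_le_sum_of_subset_of_nonneg (subset_univ G)
            (fun x _ _ => (Real.exp_pos _).le)
  have h3 : (G.card : ℝ) * Real.exp (t * k) * F.card ≤ Real.exp (t^2 * n / 4) * 4 ^ n :=
    le_trans (mul_le_mul_of_nonneg_right hGsum (Nat.cast_nonneg _)) hkey
  have harith : t^2 * n / 4 - t * k = -(k : ℝ)^2 / n := by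
    rw [htdef]; field_simp; ring
  have h2n : (2:ℝ)^n * 2^n = 4^n := by rw [← mul_pow]; norm_num
  rw [div_mul_div_comm, div_le_iff₀ (by positivity), h2n, ← harith, Real.exp_sub,
    div_mul_eq_mul_div, le_div_iff₀ (Real.exp_pos _), mul_right_comm]
  exact h3
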